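/- Let C_25 be the cycle graph on 25 vertices. Then: (a) C_25 has a burning sequence of length 5 (indeed b(C_25) = ⌈√25⌉ = 5); and (b) there exists a sequence of vertices u_1, …, u_5 satisfying the greedy condition of the heuristic Gr with guess p = 5 — for every i ∈ {1, …, 5} and every vertex w, |N_{5−i}[w] \ B_{i−1}| ≤ |N_{5−i}[u_i] \ B_{i−1}|, where B_{i−1} = ⋃_{j<i} N_{5−j}[u_j] and B_0 = ∅ — such that B_5 is not the whole vertex set. That is, even when run with the correct guess p = b(G), the greedy heuristic Gr may fail to return a burning sequence on a cycle. -/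

import Mathlib

/-- The closed ball `N_r[v] = {w : dist w v ≤ r}` of radius `r` around `v`. -/
noncomputable def closedBall {V : Type*} [Fintype V] (G : SimpleGraph V) (r : ℕ) (v : V) :
    Finset V :=
  Finset.univ.filter (fun w => G.dist w v ≤ r)

/-- The set `B_i` of vertices covered after the first `i` steps of the greedy burning
heuristic with guess `p` and selected vertices `u 0, u 1, …`: the union of the balls
`N_{p-(j+1)}[u j]` for `j < i`. -/
noncomputable def greedyCovered {V : Type*} [Fintype V] [DecidableEq V] (G : SimpleGraph V)
    (p : ℕ) (u : ℕ → V) (i : ℕ) : Finset V :=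
  (Finset.range i).biUnion (fun j => closedBall G (p - (j + 1)) (u j))

open Finset
open scoped Fin.NatCast Fin.CommRing

/-- Combinatorial (cyclic) distance on the 25-cycle. -/
def cd (v w : Fin 25) : ℕ := min (w - v).val (v - w).val

lemma cd_lip : ∀ v u w : Fin 25, (SimpleGraph.cycleGraph 25).Adj v u → cd v w ≤ cd u w + 1 := by
  decide

lemma cd_le_walk {v w : Fin 25} (p : (SimpleGraph.cycleGraph 25).Walk v w) :
    cd v w ≤ p.length := by
  induction p with
  | nil => simp [cd]
  | cons h q ih =>
    rw [SimpleGraph.Walk.length_cons]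
    exact le_trans (cd_lip _ _ _ h) (Nat.add_le_add_right ih 1)

lemma cd_le_dist (v w : Fin 25) : cd v w ≤ (SimpleGraph.cycleGraph 25).dist v w := by
  obtain ⟨p, hp⟩ :=
    (SimpleGraph.cycleGraph_connected (n := 24)).exists_walk_length_eq_dist v w
  exact hp ▸ cd_le_walk p

lemma dist_add_le (v : Fin 25) : ∀ k : ℕ,
    (SimpleGraph.cycleGraph 25).dist v (v + (k : Fin 25)) ≤ k := by
  intro k
  induction k with
  | zero => simp
  | succ k ih =>
    have hadj : (SimpleGraph.cycleGraph 25).Adj (v + (k : Fin 25)) (v + ((k+1 : ℕ) : Fin 25)) := by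
      rw [SimpleGraph.cycleGraph_adj']
      right
      have : (v + ((k+1 : ℕ) : Fin 25)) - (v + (k : Fin 25)) = 1 := by
        push_cast
        ring
      rw [this]
      rfl
    calc (SimpleGraph.cycleGraph 25).dist v (v + ((k+1 : ℕ) : Fin 25))
        ≤ (SimpleGraph.cycleGraph 25).dist v (v + (k : Fin 25))
          + (SimpleGraph.cycleGraph 25).dist (v + (k : Fin 25)) (v + ((k+1:ℕ) : Fin 25)) :=
          (SimpleGraph.cycleGraph_connected (n := 24)).dist_triangle
      _ ≤ k + 1 := by
          gcongr
          exact le_trans (SimpleGraph.dist_le hadj.toWalk) (by simp)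

lemma dist_le_cd (v w : Fin 25) : (SimpleGraph.cycleGraph 25).dist v w ≤ cd v w := by
  rcases le_total ((w - v).val) ((v - w).val) with h | h
  · have hw : v + (((w - v).val : ℕ) : Fin 25) = w := by
      rw [Fin.cast_val_eq_self]; ring
    have := dist_add_le v ((w - v).val)
    rw [hw] at this
    simpa [cd, Nat.min_eq_left h] using this
  · have hw : w + (((v - w).val : ℕ) : Fin 25) = v := by
      rw [Fin.cast_val_eq_self]; ring
    have := dist_add_le w ((v - w).val)
    rw [hw] at this
    rw [SimpleGraph.dist_comm]
    simpa [cd, Nat.min_eq_right h] using this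

lemma dist_eq_cd (v w : Fin 25) : (SimpleGraph.cycleGraph 25).dist v w = cd v w :=
  le_antisymm (dist_le_cd v w) (cd_le_dist v w)

lemma ball_card (r : ℕ) (w : Fin 25) :
    (univ.filter (fun x => cd x w ≤ r)).card ≤ 2 * r + 1 := by
  have hsub : univ.filter (fun x => cd x w ≤ r)
      ⊆ (range (2 * r + 1)).image (fun k : ℕ => w + (k : Fin 25) - (r : Fin 25)) := by
    intro x hx
    replace hx : min (w - x).val (x - w).val ≤ r := by simpa [cd] using hx
    rcases min_le_iff.mp hx with h | h
    · refine mem_image.mpr ⟨r - (w - x).val, mem_range.mpr (by omega), ?_⟩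
      rw [Nat.cast_sub h, Fin.cast_val_eq_self]
      ring
    · refine mem_image.mpr ⟨r + (x - w).val, mem_range.mpr (by omega), ?_⟩
      rw [Nat.cast_add, Fin.cast_val_eq_self]
      ring
  calc (univ.filter (fun x => cd x w ≤ r)).card
      ≤ _ := card_le_card hsub
    _ ≤ (range (2*r+1)).card := card_image_le
    _ = 2 * r + 1 := card_range _

lemma sum_odds (p : ℕ) : ∑ i ∈ range p, (2 * (p - 1 - i) + 1) = p ^ 2 := by
  rw [Finset.sum_range_reflect (fun j => 2 * j + 1) p]
  induction p with
  | zero => simp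
  | succ n ih => rw [sum_range_succ, ih]; ring

lemma closedBall_eq (r : ℕ) (v : Fin 25) :
    closedBall (SimpleGraph.cycleGraph 25) r v
      = univ.filter (fun w => cd w v ≤ r) := by
  ext w
  simp [closedBall, dist_eq_cd]

lemma greedyCovered_eq (u : ℕ → Fin 25) (i : ℕ) :
    greedyCovered (SimpleGraph.cycleGraph 25) 5 u i
      = (range i).biUnion (fun j => univ.filter (fun w => cd w (u j) ≤ 5 - (j + 1))) :=
  Finset.biUnion_congr rfl (fun j _ => closedBall_eq _ _)

/-- The greedy run chosen for part (b). -/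
def gu : ℕ → Fin 25
  | 0 => 4
  | 1 => 13
  | 2 => 20
  | 3 => 23
  | _ => 9

/-- Corollary 1: (a) the cycle `C_25` has a burning sequence of length 5,
and indeed its burning number equals `5 = ⌈√25⌉`; (b) there is a run of the greedy
heuristic Gr with the correct guess `p = 5` (each `u i` maximizing the number of newly
covered vertices) whose final covered set `B_5` is not the whole vertex set, i.e. Gr may
fail to return a burning sequence on a cycle. -/
theorem greedy_may_fail_on_cycle_C25 :
    (∃ u : Fin 5 → Fin 25, ∀ v : Fin 25, ∃ i : Fin 5,
      (SimpleGraph.cycleGraph 25).dist v (u i) ≤ 5 - (i.1 + 1)) ∧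
    sInf {p : ℕ | ∃ u : Fin p → Fin 25, ∀ v : Fin 25, ∃ i : Fin p,
      (SimpleGraph.cycleGraph 25).dist v (u i) ≤ p - (i.1 + 1)} = 5 ∧
    5 = Nat.ceil (Real.sqrt 25) ∧
    ∃ u : ℕ → Fin 25,
      (∀ i < 5, ∀ w : Fin 25,
        (closedBall (SimpleGraph.cycleGraph 25) (5 - (i + 1)) w
            \ greedyCovered (SimpleGraph.cycleGraph 25) 5 u i).card
          ≤ (closedBall (SimpleGraph.cycleGraph 25) (5 - (i + 1)) (u i)
            \ greedyCovered (SimpleGraph.cycleGraph 25) 5 u i).card) ∧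
      greedyCovered (SimpleGraph.cycleGraph 25) 5 u 5 ≠ Finset.univ := by
  have key : ∀ v : Fin 25, ∃ i : Fin 5, cd v (![4, 12, 18, 22, 24] i) ≤ 5 - (i.1 + 1) := by
    decide
  have hA : ∀ v : Fin 25, ∃ i : Fin 5,
      (SimpleGraph.cycleGraph 25).dist v (![4, 12, 18, 22, 24] i) ≤ 5 - (i.1 + 1) := by
    intro v
    obtain ⟨i, hi⟩ := key v
    exact ⟨i, le_trans (dist_le_cd _ _) hi⟩
  refine ⟨⟨_, hA⟩, ?_, ?_, ?_⟩
  · apply le_antisymm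
    · exact Nat.sInf_le ⟨_, hA⟩
    · have hmem : (5:ℕ) ∈ {p : ℕ | ∃ u : Fin p → Fin 25, ∀ v : Fin 25, ∃ i : Fin p,
          (SimpleGraph.cycleGraph 25).dist v (u i) ≤ p - (i.1 + 1)} := ⟨![4, 12, 18, 22, 24], hA⟩
      apply le_csInf ⟨5, hmem⟩
      intro p hp
      obtain ⟨u, hu⟩ := hp
      by_contra hlt
      push_neg at hlt
      have hcover : (univ : Finset (Fin 25)) ⊆ (univ : Finset (Fin p)).biUnion
          (fun i => univ.filter (fun x => cd x (u i) ≤ p - (i.1 + 1))) := by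
        intro v _
        obtain ⟨i, hi⟩ := hu v
        exact mem_biUnion.mpr ⟨i, mem_univ i,
          mem_filter.mpr ⟨mem_univ v, le_trans (cd_le_dist v (u i)) hi⟩⟩
      have h25 : 25 ≤ ∑ i : Fin p, (2 * (p - (i.1 + 1)) + 1) := by
        calc 25 = (univ : Finset (Fin 25)).card := by simp
          _ ≤ _ := card_le_card hcover
          _ ≤ ∑ i : Fin p, (univ.filter (fun x => cd x (u i) ≤ p - (i.1 + 1))).card :=
              card_biUnion_le
          _ ≤ ∑ i : Fin p, (2 * (p - (i.1 + 1)) + 1) :=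
              sum_le_sum (fun i _ => ball_card _ _)
      have hsum : ∑ i : Fin p, (2 * (p - (i.1 + 1)) + 1) = p ^ 2 := by
        rw [Fin.sum_univ_eq_sum_range (fun j => 2 * (p - (j + 1)) + 1) p]
        refine Eq.trans (Finset.sum_congr rfl fun j _ => by
          have : p - (j + 1) = p - 1 - j := by omega
          rw [this]) (sum_odds p)
      have h2 : 25 ≤ p ^ 2 := hsum ▸ h25
      have := Nat.pow_le_pow_left (show p ≤ 4 by omega) 2
      omega
  · have h5 : Real.sqrt 25 = 5 := by
      rw [show (25 : ℝ) = 5 ^ 2 by norm_num]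
      exact Real.sqrt_sq (by norm_num)
    rw [h5]
    norm_num
  · refine ⟨gu, ?_, ?_⟩
    · intro i hi w
      rw [closedBall_eq, closedBall_eq, greedyCovered_eq]
      interval_cases i <;> revert w <;> decide
    · rw [greedyCovered_eq]
      decide
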